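/- Fix (x, y, θ, c) with β > 0 and α > 0, and the constraint that the global contact-point velocity equals R(θ)·(v_t, vₙ), where the contact point is p_c = R(θ)·(c, −α) + (x, y). Among all (ẋ, ẏ, θ̇) satisfying this kinematic constraint together with ċ free (ċ determined by the constraint), the minimizer of J(ẋ, ẏ, θ̇) = (ẋ² + ẏ²) + β²θ̇² is ẋ = −(β²/(β²+c²))vₙ sin θ, ẏ = (β²/(β²+c²))vₙ cos θ, θ̇ = (c/(β²+c²))vₙ. -/

import Mathlib

/-- Planar rotation by angle `θ`. -/
noncomputable def Rot (θ : ℝ) (v : ℝ × ℝ) : ℝ × ℝ :=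
  (Real.cos θ * v.1 - Real.sin θ * v.2, Real.sin θ * v.1 + Real.cos θ * v.2)

/-- The kinematic constraint of frictionless pushing: the global velocity of the
contact point `p_c = R(θ)(c, -α) + (x,y)` (with time derivative computed treating `c`
as a state with rate `dc`) equals `R(θ)(v_t, v_n)`. -/
def ContactConstraint (θ c α vt vn dx dy dθ dc : ℝ) : Prop :=
  ((dx, dy) : ℝ × ℝ) + dθ • Rot (θ + Real.pi / 2) ((c, -α)) + Rot θ ((dc, 0)) = Rot θ ((vt, vn))

theorem least_work_minimizer (x y θ c α β vt vn : ℝ) (hβ : 0 < β) (hα : 0 < α) :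
    (∃ dc : ℝ, ContactConstraint θ c α vt vn
        (-(β ^ 2 / (β ^ 2 + c ^ 2)) * vn * Real.sin θ)
        ((β ^ 2 / (β ^ 2 + c ^ 2)) * vn * Real.cos θ)
        ((c / (β ^ 2 + c ^ 2)) * vn) dc) ∧
    ∀ dx dy dθ dc : ℝ, ContactConstraint θ c α vt vn dx dy dθ dc →
      ((-(β ^ 2 / (β ^ 2 + c ^ 2)) * vn * Real.sin θ) ^ 2
        + ((β ^ 2 / (β ^ 2 + c ^ 2)) * vn * Real.cos θ) ^ 2
        + β ^ 2 * ((c / (β ^ 2 + c ^ 2)) * vn) ^ 2)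
      ≤ dx ^ 2 + dy ^ 2 + β ^ 2 * dθ ^ 2 := by
  have hk : 0 < β ^ 2 + c ^ 2 := by positivity
  have hpyth : Real.sin θ ^ 2 + Real.cos θ ^ 2 = 1 := Real.sin_sq_add_cos_sq θ
  constructor
  · refine ⟨vt - α * ((c / (β ^ 2 + c ^ 2)) * vn), ?_⟩
    unfold ContactConstraint Rot
    simp only [Real.cos_add, Real.sin_add, Real.cos_pi_div_two, Real.sin_pi_div_two,
      Prod.mk_add_mk, Prod.smul_mk, smul_eq_mul, Prod.mk.injEq]
    constructor <;> field_simp <;> ring_nf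
  · intro dx dy dθ dc hcon
    unfold ContactConstraint Rot at hcon
    simp only [Real.cos_add, Real.sin_add, Real.cos_pi_div_two, Real.sin_pi_div_two,
      Prod.mk_add_mk, Prod.smul_mk, smul_eq_mul, Prod.mk.injEq] at hcon
    obtain ⟨h1, h2⟩ := hcon
    have hlin : -Real.sin θ * dx + Real.cos θ * dy + c * dθ = vn := by
      linear_combination (-Real.sin θ) * h1 + Real.cos θ * h2 - (c * dθ - vn) * hpyth
    have key : (β ^ 2 + c ^ 2) * (dx ^ 2 + dy ^ 2 + β ^ 2 * dθ ^ 2) ≥ β ^ 2 * vn ^ 2 := by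
      rw [← hlin]
      have key_eq : (β ^ 2 + c ^ 2) * (dx ^ 2 + dy ^ 2 + β ^ 2 * dθ ^ 2)
          - β ^ 2 * (-Real.sin θ * dx + Real.cos θ * dy + c * dθ) ^ 2
          = (β ^ 2 + c ^ 2) * (Real.cos θ * dx + Real.sin θ * dy) ^ 2
            + (β ^ 2 * dθ - c * (-Real.sin θ * dx + Real.cos θ * dy)) ^ 2 := by
        linear_combination (-((β ^ 2 + c ^ 2) * (dx ^ 2 + dy ^ 2))) * hpyth
      nlinarith [mul_nonneg hk.le (sq_nonneg (Real.cos θ * dx + Real.sin θ * dy)),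
        sq_nonneg (β ^ 2 * dθ - c * (-Real.sin θ * dx + Real.cos θ * dy)), key_eq]
    have lhs_eq : (-(β ^ 2 / (β ^ 2 + c ^ 2)) * vn * Real.sin θ) ^ 2
        + ((β ^ 2 / (β ^ 2 + c ^ 2)) * vn * Real.cos θ) ^ 2
        + β ^ 2 * ((c / (β ^ 2 + c ^ 2)) * vn) ^ 2 = β ^ 2 * vn ^ 2 / (β ^ 2 + c ^ 2) := by
      field_simp
      linear_combination (vn ^ 2 * β ^ 2) * hpyth
    rw [lhs_eq, div_le_iff₀ hk]
    linarith [key]
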